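/- Let y be a nonnegative square-integrable real random variable with E[y] = μ where 0 ≤ μ ≤ 1, and suppose E[y²] ≤ 1.05771·μ + 0.231·μ². Then E[p(y)] ≥ 0.704·μ, where p(y) := 1 - exp(-(y + (1/2)·y² + ((4 - 2√3)/3)·y³)). -/

import Mathlib

open MeasureTheory Finset

private lemma expx_bound {x : ℝ} (hx : |x| ≤ 1) :
    Real.exp x ≤ 1 + x + x^2/2 + x^3/6 + x^4/24 + x^4/100 := by
  have hb := Real.exp_bound hx (by norm_num : 0 < 5)
  have h1 : ∑ m ∈ Finset.range 5, x ^ m / m.factorial = 1 + x + x^2/2 + x^3/6 + x^4/24 := by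
    simp [Finset.sum_range_succ, Nat.factorial]
  rw [h1] at hb
  norm_num [Nat.factorial] at hb
  have h4 : |x|^4 = x^4 := by
    rw [← abs_pow, abs_of_nonneg]; positivity
  have h5 : |x|^5 ≤ x^4 := by
    calc |x|^5 = |x|^4 * |x| := by ring
    _ ≤ |x|^4 * 1 := by nlinarith [abs_nonneg x, pow_nonneg (abs_nonneg x) 4]
    _ = x^4 := by rw [h4, mul_one]
  have hb' := (abs_sub_le_iff.1 hb).1
  nlinarith [hb', h5]

private lemma exp_neg_le_of {G L U : ℝ} (hL : L ≤ Real.exp G) (hL0 : 0 < L) (hUL : 1 ≤ U * L) :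
    Real.exp (-G) ≤ U := by
  have hU0 : 0 < U := by nlinarith
  have h2 : 1 ≤ U * Real.exp G := by nlinarith [Real.exp_pos G]
  have hmul : Real.exp (-G) * Real.exp G = 1 := by
    rw [← Real.exp_add]; simp
  have hmul2 : U * (Real.exp (-G) * Real.exp G) = U := by rw [hmul, mul_one]
  nlinarith [mul_nonneg (Real.exp_pos (-G)).le (sub_nonneg.2 h2), hmul2]

set_option maxHeartbeats 3200000 in
private lemma key1 (t : ℝ) (ht : 0 ≤ t) :
    Real.exp (-(t + t^2/2 + ((1786327949:ℝ)/10000000000)*t^3)) ≤ (1:ℝ) + ((-249:ℝ)/250)*t + ((2509:ℝ)/10000)*t^2 := by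
  rcases le_or_gt t ((31:ℝ)/50) with hcut1 | hcut1
  · have hA : (0:ℝ) ≤ t - (0:ℝ) := by linarith
    have hB : (0:ℝ) ≤ ((31:ℝ)/50) - t := by linarith
    have hgl : (0:ℝ) - 1 ≤ t + t^2/2 + ((1786327949:ℝ)/10000000000)*t^3 := by
      nlinarith [hA, pow_nonneg hA 2, pow_nonneg hA 3, ht, mul_nonneg hA ht, mul_nonneg (mul_nonneg hA ht) ht]
    have hgr : t + t^2/2 + ((1786327949:ℝ)/10000000000)*t^3 ≤ (0:ℝ) + 1 := by
      nlinarith [hB, pow_nonneg hB 2, pow_nonneg hB 3, ht, mul_nonneg hA hB, mul_nonneg hB hB, mul_nonneg (mul_nonneg hB hB) hB]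
    have hx : |(0:ℝ) - (t + t^2/2 + ((1786327949:ℝ)/10000000000)*t^3)| ≤ 1 := abs_le.mpr ⟨by linarith, by linarith⟩
    have hex := expx_bound hx
    have hL : ((1:ℝ)) ≤ Real.exp (0:ℝ) := by
      refine le_trans ?_ (Real.sum_le_exp_of_nonneg (by norm_num) 2)
      simp only [Finset.sum_range_succ, Finset.sum_range_zero, Nat.factorial]
      norm_num
    have hU := exp_neg_le_of hL (by norm_num) (by norm_num : (1:ℝ) ≤ (1:ℝ) * (1:ℝ))
    have hsplit : Real.exp (-(t + t^2/2 + ((1786327949:ℝ)/10000000000)*t^3)) = Real.exp (-(0:ℝ)) * Real.exp ((0:ℝ) - (t + t^2/2 + ((1786327949:ℝ)/10000000000)*t^3)) := by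
      rw [← Real.exp_add]; ring_nf
    rw [hsplit]
    have hmain : Real.exp (-(0:ℝ)) * Real.exp ((0:ℝ) - (t + t^2/2 + ((1786327949:ℝ)/10000000000)*t^3)) ≤ (1:ℝ) * (1 + ((0:ℝ) - (t + t^2/2 + ((1786327949:ℝ)/10000000000)*t^3)) + ((0:ℝ) - (t + t^2/2 + ((1786327949:ℝ)/10000000000)*t^3))^2/2 + ((0:ℝ) - (t + t^2/2 + ((1786327949:ℝ)/10000000000)*t^3))^3/6 + ((0:ℝ) - (t + t^2/2 + ((1786327949:ℝ)/10000000000)*t^3))^4/24 + ((0:ℝ) - (t + t^2/2 + ((1786327949:ℝ)/10000000000)*t^3))^4/100) :=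
      mul_le_mul hU hex (Real.exp_pos _).le (by norm_num)
    refine le_trans hmain ?_
    have hsA : (0:ℝ) ≤ (t - (0:ℝ)) := by linarith
    have hsB : (0:ℝ) ≤ (((31:ℝ)/50) - t) := by linarith
    linarith [sq_nonneg (((61615692609151940514009933957972775880532233933032099985969:ℝ)/292968750000000000000000000000000000000000000000000000000000)*(t - (0:ℝ)) + ((1:ℝ)/250)), hsA, hsB, mul_nonneg hsA hsA, mul_nonneg hsB hsB, mul_nonneg hsA hsB, pow_nonneg hsA 2, mul_nonneg (pow_nonneg hsA 2) hsB, mul_nonneg (pow_nonneg hsA 3) hsB, mul_nonneg (pow_nonneg hsA 4) hsB, mul_nonneg (pow_nonneg hsA 5) hsB, mul_nonneg (pow_nonneg hsA 6) hsB, mul_nonneg (pow_nonneg hsA 7) hsB, mul_nonneg (pow_nonneg hsA 8) hsB, mul_nonneg (pow_nonneg hsA 9) hsB, mul_nonneg (pow_nonneg hsA 10) hsB, mul_nonneg (pow_nonneg hsA 11) hsB, pow_nonneg hsA 3, pow_nonneg hsA 4, pow_nonneg hsA 5, pow_nonneg hsA 6, pow_nonneg hsA 7, pow_nonneg hsA 8,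 pow_nonneg hsA 9, pow_nonneg hsA 10, pow_nonneg hsA 11, pow_nonneg hsA 12]
  rcases le_or_gt t ((59:ℝ)/50) with hcut2 | hcut2
  · have hA : (0:ℝ) ≤ t - ((31:ℝ)/50) := by linarith
    have hB : (0:ℝ) ≤ ((59:ℝ)/50) - t := by linarith
    have hgl : ((71761:ℝ)/50000) - 1 ≤ t + t^2/2 + ((1786327949:ℝ)/10000000000)*t^3 := by
      nlinarith [hA, pow_nonneg hA 2, pow_nonneg hA 3, ht, mul_nonneg hA ht, mul_nonneg (mul_nonneg hA ht) ht]
    have hgr : t + t^2/2 + ((1786327949:ℝ)/10000000000)*t^3 ≤ ((71761:ℝ)/50000) + 1 := by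
      nlinarith [hB, pow_nonneg hB 2, pow_nonneg hB 3, ht, mul_nonneg hA hB, mul_nonneg hB hB, mul_nonneg (mul_nonneg hB hB) hB]
    have hx : |((71761:ℝ)/50000) - (t + t^2/2 + ((1786327949:ℝ)/10000000000)*t^3)| ≤ 1 := abs_le.mpr ⟨by linarith, by linarith⟩
    have hex := expx_bound hx
    have hL : (((420056903:ℝ)/100000000)) ≤ Real.exp ((71761:ℝ)/50000) := by
      refine le_trans ?_ (Real.sum_le_exp_of_nonneg (by norm_num) 15)
      simp only [Finset.sum_range_succ, Finset.sum_range_zero, Nat.factorial]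
      norm_num
    have hU := exp_neg_le_of hL (by norm_num) (by norm_num : (1:ℝ) ≤ ((238063:ℝ)/1000000) * ((420056903:ℝ)/100000000))
    have hsplit : Real.exp (-(t + t^2/2 + ((1786327949:ℝ)/10000000000)*t^3)) = Real.exp (-((71761:ℝ)/50000)) * Real.exp (((71761:ℝ)/50000) - (t + t^2/2 + ((1786327949:ℝ)/10000000000)*t^3)) := by
      rw [← Real.exp_add]; ring_nf
    rw [hsplit]
    have hmain : Real.exp (-((71761:ℝ)/50000)) * Real.exp (((71761:ℝ)/50000) - (t + t^2/2 + ((1786327949:ℝ)/10000000000)*t^3)) ≤ ((238063:ℝ)/1000000) * (1 + (((71761:ℝ)/50000) - (t + t^2/2 + ((1786327949:ℝ)/10000000000)*t^3)) + (((71761:ℝ)/50000) - (t + t^2/2 + ((1786327949:ℝ)/10000000000)*t^3))^2/2 + (((71761:ℝ)/50000) - (t + t^2/2 + ((1786327949:ℝ)/10000000000)*t^3))^3/6 + (((71761:ℝ)/50000) - (t + t^2/2 + ((1786327949:ℝ)/10000000000)*t^3))^4/24 + (((71761:ℝ)/50000) - (t + t^2/2 + ((1786327949:ℝ)/10000000000)*t^3))^4/100)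 :=
      mul_le_mul hU hex (Real.exp_pos _).le (by norm_num)
    refine le_trans hmain ?_
    have hsA : (0:ℝ) ≤ (t - ((31:ℝ)/50)) := by linarith
    have hsB : (0:ℝ) ≤ (((59:ℝ)/50) - t) := by linarith
    linarith [sq_nonneg (((-18750030674749482309656493356694141608122576557767715381808546163:ℝ)/48828125000000000000000000000000000000000000000000000000000000000)*(t - ((31:ℝ)/50)) + ((226903384229942649696725897355015353516493467662746779912751879457:ℝ)/2441406250000000000000000000000000000000000000000000000000000000000)), hsA, hsB, mul_nonneg hsA hsA, mul_nonneg hsB hsB, mul_nonneg hsA hsB, pow_nonneg hsA 2, mul_nonneg (pow_nonneg hsA 2) hsB, mul_nonneg (pow_nonneg hsA 3) hsB, mul_nonneg (pow_nonneg hsA 4) hsB, mul_nonneg (pow_nonneg hsA 5) hsB, mul_nonneg (pow_nonneg hsA 6) hsB, mul_nonneg (pow_nonneg hsA 7) hsB, mul_nonneg (pow_nonneg hsA 8) hsB, mul_nonneg (pow_nonneg hsA 9) hsB, mul_nonneg (pow_nonneg hsA 10) hsB, mul_nonneg (pow_nonneg hsA 11) hsB, pow_nonneg hsA 3, pow_nonneg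 hsA 4, pow_nonneg hsA 5, pow_nonneg hsA 6, pow_nonneg hsA 7, pow_nonneg hsA 8, pow_nonneg hsA 9, pow_nonneg hsA 10, pow_nonneg hsA 11, pow_nonneg hsA 12]
  rcases le_or_gt t ((41:ℝ)/25) with hcut3 | hcut3
  · have hA : (0:ℝ) ≤ t - ((59:ℝ)/50) := by linarith
    have hB : (0:ℝ) ≤ ((41:ℝ)/25) - t := by linarith
    have hgl : ((293967:ℝ)/100000) - 1 ≤ t + t^2/2 + ((1786327949:ℝ)/10000000000)*t^3 := by
      nlinarith [hA, pow_nonneg hA 2, pow_nonneg hA 3, ht, mul_nonneg hA ht, mul_nonneg (mul_nonneg hA ht) ht]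
    have hgr : t + t^2/2 + ((1786327949:ℝ)/10000000000)*t^3 ≤ ((293967:ℝ)/100000) + 1 := by
      nlinarith [hB, pow_nonneg hB 2, pow_nonneg hB 3, ht, mul_nonneg hA hB, mul_nonneg hB hB, mul_nonneg (mul_nonneg hB hB) hB]
    have hx : |((293967:ℝ)/100000) - (t + t^2/2 + ((1786327949:ℝ)/10000000000)*t^3)| ≤ 1 := abs_le.mpr ⟨by linarith, by linarith⟩
    have hex := expx_bound hx
    have hL : (((1890960511:ℝ)/100000000)) ≤ Real.exp ((293967:ℝ)/100000) := by
      refine le_trans ?_ (Real.sum_le_exp_of_nonneg (by norm_num) 21)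
      simp only [Finset.sum_range_succ, Finset.sum_range_zero, Nat.factorial]
      norm_num
    have hU := exp_neg_le_of hL (by norm_num) (by norm_num : (1:ℝ) ≤ ((8263:ℝ)/156250) * ((1890960511:ℝ)/100000000))
    have hsplit : Real.exp (-(t + t^2/2 + ((1786327949:ℝ)/10000000000)*t^3)) = Real.exp (-((293967:ℝ)/100000)) * Real.exp (((293967:ℝ)/100000) - (t + t^2/2 + ((1786327949:ℝ)/10000000000)*t^3)) := by
      rw [← Real.exp_add]; ring_nf
    rw [hsplit]
    have hmain : Real.exp (-((293967:ℝ)/100000)) * Real.exp (((293967:ℝ)/100000) - (t + t^2/2 + ((1786327949:ℝ)/10000000000)*t^3)) ≤ ((8263:ℝ)/156250) * (1 + (((293967:ℝ)/100000) - (t + t^2/2 + ((1786327949:ℝ)/10000000000)*t^3)) + (((293967:ℝ)/100000) - (t + t^2/2 + ((1786327949:ℝ)/10000000000)*t^3))^2/2 + (((293967:ℝ)/100000) - (t + t^2/2 + ((1786327949:ℝ)/10000000000)*t^3))^3/6 + (((293967:ℝ)/100000) - (t + t^2/2 + ((1786327949:ℝ)/10000000000)*t^3))^4/24 + (((293967:ℝ)/100000)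 - (t + t^2/2 + ((1786327949:ℝ)/10000000000)*t^3))^4/100) :=
      mul_le_mul hU hex (Real.exp_pos _).le (by norm_num)
    refine le_trans hmain ?_
    have hsA : (0:ℝ) ≤ (t - ((59:ℝ)/50)) := by linarith
    have hsB : (0:ℝ) ≤ (((41:ℝ)/25) - t) := by linarith
    linarith [sq_nonneg (((-4745391539587601175458160443678742342147681132762275957699208449:ℝ)/22888183593750000000000000000000000000000000000000000000000000000)*(t - ((59:ℝ)/50)) + ((-79548450357676007903235308991882513875827027107209402531068481681:ℝ)/1144409179687500000000000000000000000000000000000000000000000000000)), hsA, hsB, mul_nonneg hsA hsA, mul_nonneg hsB hsB, mul_nonneg hsA hsB, pow_nonneg hsA 2, mul_nonneg (pow_nonneg hsA 2) hsB, mul_nonneg (pow_nonneg hsA 3) hsB, mul_nonneg (pow_nonneg hsA 4) hsB, mul_nonneg (pow_nonneg hsA 5) hsB, mul_nonneg (pow_nonneg hsA 6) hsB, mul_nonneg (pow_nonneg hsA 7) hsB, mul_nonneg (pow_nonneg hsA 8) hsB, mul_nonneg (pow_nonneg hsA 9) hsB, mul_nonneg (pow_nonneg hsA 10) hsB, mul_nonneg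 (pow_nonneg hsA 11) hsB, pow_nonneg hsA 3, pow_nonneg hsA 4, pow_nonneg hsA 5, pow_nonneg hsA 6, pow_nonneg hsA 7, pow_nonneg hsA 8, pow_nonneg hsA 9, pow_nonneg hsA 10, pow_nonneg hsA 11, pow_nonneg hsA 12]
  rcases le_or_gt t (2:ℝ) with hcut4 | hcut4
  · have hA : (0:ℝ) ≤ t - ((41:ℝ)/25) := by linarith
    have hB : (0:ℝ) ≤ (2:ℝ) - t := by linarith
    have hgl : ((459919:ℝ)/100000) - 1 ≤ t + t^2/2 + ((1786327949:ℝ)/10000000000)*t^3 := by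
      nlinarith [hA, pow_nonneg hA 2, pow_nonneg hA 3, ht, mul_nonneg hA ht, mul_nonneg (mul_nonneg hA ht) ht]
    have hgr : t + t^2/2 + ((1786327949:ℝ)/10000000000)*t^3 ≤ ((459919:ℝ)/100000) + 1 := by
      nlinarith [hB, pow_nonneg hB 2, pow_nonneg hB 3, ht, mul_nonneg hA hB, mul_nonneg hB hB, mul_nonneg (mul_nonneg hB hB) hB]
    have hx : |((459919:ℝ)/100000) - (t + t^2/2 + ((1786327949:ℝ)/10000000000)*t^3)| ≤ 1 := abs_le.mpr ⟨by linarith, by linarith⟩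
    have hex := expx_bound hx
    have hL : (((9940376597:ℝ)/100000000)) ≤ Real.exp ((459919:ℝ)/100000) := by
      refine le_trans ?_ (Real.sum_le_exp_of_nonneg (by norm_num) 26)
      simp only [Finset.sum_range_succ, Finset.sum_range_zero, Nat.factorial]
      norm_num
    have hU := exp_neg_le_of hL (by norm_num) (by norm_num : (1:ℝ) ≤ ((503:ℝ)/50000) * ((9940376597:ℝ)/100000000))
    have hsplit : Real.exp (-(t + t^2/2 + ((1786327949:ℝ)/10000000000)*t^3)) = Real.exp (-((459919:ℝ)/100000)) * Real.exp (((459919:ℝ)/100000) - (t + t^2/2 + ((1786327949:ℝ)/10000000000)*t^3)) := by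
      rw [← Real.exp_add]; ring_nf
    rw [hsplit]
    have hmain : Real.exp (-((459919:ℝ)/100000)) * Real.exp (((459919:ℝ)/100000) - (t + t^2/2 + ((1786327949:ℝ)/10000000000)*t^3)) ≤ ((503:ℝ)/50000) * (1 + (((459919:ℝ)/100000) - (t + t^2/2 + ((1786327949:ℝ)/10000000000)*t^3)) + (((459919:ℝ)/100000) - (t + t^2/2 + ((1786327949:ℝ)/10000000000)*t^3))^2/2 + (((459919:ℝ)/100000) - (t + t^2/2 + ((1786327949:ℝ)/10000000000)*t^3))^3/6 + (((459919:ℝ)/100000) - (t + t^2/2 + ((1786327949:ℝ)/10000000000)*t^3))^4/24 + (((459919:ℝ)/100000) - (t + t^2/2 + ((1786327949:ℝ)/10000000000)*t^3))^4/100) :=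
      mul_le_mul hU hex (Real.exp_pos _).le (by norm_num)
    refine le_trans hmain ?_
    rcases le_or_gt t ((193:ℝ)/100) with hc | hc
    · have hsA : (0:ℝ) ≤ (((193:ℝ)/100) - t) := by linarith
      have hsB : (0:ℝ) ≤ (t - ((41:ℝ)/25)) := by linarith
      linarith [sq_nonneg (((295894188556370407834170662189093431409320521562704501803852704627:ℝ)/1000000000000000000000000000000000000000000000000000000000000000000)*(((193:ℝ)/100) - t) + ((-2177667638170533300639017293335980438890592998759198282016866534997:ℝ)/750000000000000000000000000000000000000000000000000000000000000000000)), hsA, hsB, mul_nonneg hsA hsA, mul_nonneg hsB hsB, mul_nonneg hsA hsB, pow_nonneg hsA 2, mul_nonneg (pow_nonneg hsA 2) hsB, mul_nonneg (pow_nonneg hsA 3) hsB, mul_nonneg (pow_nonneg hsA 4) hsB, mul_nonneg (pow_nonneg hsA 5) hsB, mul_nonneg (pow_nonneg hsA 6) hsB, mul_nonneg (pow_nonneg hsA 7) hsB, mul_nonneg (pow_nonneg hsA 8) hsB, mul_nonneg (pow_nonneg hsA 9) hsB, mul_nonneg (pow_nonneg hsA 10) hsB, mul_nonneg (pow_nonneg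 hsA 11) hsB, pow_nonneg hsA 3, pow_nonneg hsA 4, pow_nonneg hsA 5, pow_nonneg hsA 6, pow_nonneg hsA 7, pow_nonneg hsA 8, pow_nonneg hsA 9, pow_nonneg hsA 10, pow_nonneg hsA 11, pow_nonneg hsA 12]
    · have hsA : (0:ℝ) ≤ (t - ((193:ℝ)/100)) := by linarith
      have hsB : (0:ℝ) ≤ ((2:ℝ) - t) := by linarith
      linarith [sq_nonneg (((5340708141702346832733104430216304558906458732009680000334251916833:ℝ)/15000000000000000000000000000000000000000000000000000000000000000000)*(t - ((193:ℝ)/100)) + ((2177667638170533300639017293335980438890592998759198282016866534997:ℝ)/750000000000000000000000000000000000000000000000000000000000000000000)), hsA, hsB, mul_nonneg hsA hsA, mul_nonneg hsB hsB, mul_nonneg hsA hsB, pow_nonneg hsA 2, mul_nonneg (pow_nonneg hsA 2) hsB, mul_nonneg (pow_nonneg hsA 3) hsB, mul_nonneg (pow_nonneg hsA 4) hsB, mul_nonneg (pow_nonneg hsA 5) hsB, mul_nonneg (pow_nonneg hsA 6) hsB, mul_nonneg (pow_nonneg hsA 7) hsB, mul_nonneg (pow_nonneg hsA 8) hsB,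 mul_nonneg (pow_nonneg hsA 9) hsB, mul_nonneg (pow_nonneg hsA 10) hsB, mul_nonneg (pow_nonneg hsA 11) hsB, pow_nonneg hsA 3, pow_nonneg hsA 4, pow_nonneg hsA 5, pow_nonneg hsA 6, pow_nonneg hsA 7, pow_nonneg hsA 8, pow_nonneg hsA 9, pow_nonneg hsA 10, pow_nonneg hsA 11, pow_nonneg hsA 12]
  rcases le_or_gt t ((11:ℝ)/5) with hcut5 | hcut5
  · have hA : (0:ℝ) ≤ t - (2:ℝ) := by linarith
    have hB : (0:ℝ) ≤ ((11:ℝ)/5) - t := by linarith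
    have hgl : ((595931:ℝ)/100000) - 1 ≤ t + t^2/2 + ((1786327949:ℝ)/10000000000)*t^3 := by
      nlinarith [hA, pow_nonneg hA 2, pow_nonneg hA 3, ht, mul_nonneg hA ht, mul_nonneg (mul_nonneg hA ht) ht]
    have hgr : t + t^2/2 + ((1786327949:ℝ)/10000000000)*t^3 ≤ ((595931:ℝ)/100000) + 1 := by
      nlinarith [hB, pow_nonneg hB 2, pow_nonneg hB 3, ht, mul_nonneg hA hB, mul_nonneg hB hB, mul_nonneg (mul_nonneg hB hB) hB]
    have hx : |((595931:ℝ)/100000) - (t + t^2/2 + ((1786327949:ℝ)/10000000000)*t^3)| ≤ 1 := abs_le.mpr ⟨by linarith, by linarith⟩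
    have hex := expx_bound hx
    have hL : (((774685531:ℝ)/2000000)) ≤ Real.exp ((595931:ℝ)/100000) := by
      refine le_trans ?_ (Real.sum_le_exp_of_nonneg (by norm_num) 31)
      simp only [Finset.sum_range_succ, Finset.sum_range_zero, Nat.factorial]
      norm_num
    have hU := exp_neg_le_of hL (by norm_num) (by norm_num : (1:ℝ) ≤ ((25817:ℝ)/10000000) * ((774685531:ℝ)/2000000))
    have hsplit : Real.exp (-(t + t^2/2 + ((1786327949:ℝ)/10000000000)*t^3)) = Real.exp (-((595931:ℝ)/100000)) * Real.exp (((595931:ℝ)/100000) - (t + t^2/2 + ((1786327949:ℝ)/10000000000)*t^3)) := by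
      rw [← Real.exp_add]; ring_nf
    rw [hsplit]
    have hmain : Real.exp (-((595931:ℝ)/100000)) * Real.exp (((595931:ℝ)/100000) - (t + t^2/2 + ((1786327949:ℝ)/10000000000)*t^3)) ≤ ((25817:ℝ)/10000000) * (1 + (((595931:ℝ)/100000) - (t + t^2/2 + ((1786327949:ℝ)/10000000000)*t^3)) + (((595931:ℝ)/100000) - (t + t^2/2 + ((1786327949:ℝ)/10000000000)*t^3))^2/2 + (((595931:ℝ)/100000) - (t + t^2/2 + ((1786327949:ℝ)/10000000000)*t^3))^3/6 + (((595931:ℝ)/100000) - (t + t^2/2 + ((1786327949:ℝ)/10000000000)*t^3))^4/24 + (((595931:ℝ)/100000) - (t + t^2/2 + ((1786327949:ℝ)/10000000000)*t^3))^4/100) :=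
      mul_le_mul hU hex (Real.exp_pos _).le (by norm_num)
    refine le_trans hmain ?_
    have hsA : (0:ℝ) ≤ (t - (2:ℝ)) := by linarith
    have hsB : (0:ℝ) ≤ (((11:ℝ)/5) - t) := by linarith
    linarith [sq_nonneg (((38733391189681221225350494717851430890240220041436202611:ℝ)/97656250000000000000000000000000000000000000000000000000)*(t - (2:ℝ)) + ((73721786954967521993248193481405241482590773:ℝ)/2441406250000000000000000000000000000000000000)), hsA, hsB, mul_nonneg hsA hsA, mul_nonneg hsB hsB, mul_nonneg hsA hsB, pow_nonneg hsA 2, mul_nonneg (pow_nonneg hsA 2) hsB, mul_nonneg (pow_nonneg hsA 3) hsB, mul_nonneg (pow_nonneg hsA 4) hsB, mul_nonneg (pow_nonneg hsA 5) hsB, mul_nonneg (pow_nonneg hsA 6) hsB, mul_nonneg (pow_nonneg hsA 7) hsB, mul_nonneg (pow_nonneg hsA 8) hsB, mul_nonneg (pow_nonneg hsA 9) hsB, mul_nonneg (pow_nonneg hsA 10) hsB, mul_nonneg (pow_nonneg hsA 11) hsB, pow_nonneg hsA 3, pow_nonneg hsA 4, pow_nonneg hsA 5, pow_nonneg hsA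 6, pow_nonneg hsA 7, pow_nonneg hsA 8, pow_nonneg hsA 9, pow_nonneg hsA 10, pow_nonneg hsA 11, pow_nonneg hsA 12]
  have hB : (0:ℝ) ≤ t - ((11:ℝ)/5) := by linarith
  have hg : (((231:ℝ)/50):ℝ) ≤ t + t^2/2 + ((1786327949:ℝ)/10000000000)*t^3 := by
    nlinarith [hB, sq_nonneg (t - ((11:ℝ)/5)), mul_nonneg (mul_nonneg hB hB) hB, ht, mul_nonneg hB ht, mul_nonneg (mul_nonneg hB ht) ht]
  have h1 : Real.exp (-(t + t^2/2 + ((1786327949:ℝ)/10000000000)*t^3)) ≤ Real.exp (-(((231:ℝ)/50):ℝ)) := by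
    apply Real.exp_le_exp.2; linarith
  have hL : (((50747:ℝ)/500):ℝ) ≤ Real.exp (((231:ℝ)/50):ℝ) := by
    refine le_trans ?_ (Real.sum_le_exp_of_nonneg (by norm_num) 20)
    simp only [Finset.sum_range_succ, Finset.sum_range_zero, Nat.factorial]
    norm_num
  have h2 : Real.exp (-(((231:ℝ)/50):ℝ)) ≤ ((9853:ℝ)/1000000) := exp_neg_le_of hL (by norm_num) (by norm_num : (1:ℝ) ≤ ((9853:ℝ)/1000000) * ((50747:ℝ)/500))
  nlinarith [sq_nonneg (t - ((11:ℝ)/5)), hB]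

set_option maxHeartbeats 3200000 in
private lemma key2 (t : ℝ) (ht : 0 ≤ t) :
    Real.exp (-(t + t^2/2 + ((1786327949:ℝ)/10000000000)*t^3)) ≤ ((205703:ℝ)/200000) + ((-59033:ℝ)/50000)*t + ((34771:ℝ)/100000)*t^2 := by
  rcases le_or_gt t ((3:ℝ)/125) with hcut0 | hcut0
  · have hg : (0:ℝ) ≤ t + t^2/2 + ((1786327949:ℝ)/10000000000)*t^3 := by nlinarith [ht, pow_nonneg ht 2, pow_nonneg ht 3]
    have h1 : Real.exp (-(t + t^2/2 + ((1786327949:ℝ)/10000000000)*t^3)) ≤ 1 := Real.exp_le_one_iff.2 (by linarith)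
    nlinarith [pow_nonneg ht 2]
  rcases le_or_gt t ((3:ℝ)/4) with hcut1 | hcut1
  · have hA : (0:ℝ) ≤ t - ((3:ℝ)/125) := by linarith
    have hB : (0:ℝ) ≤ ((3:ℝ)/4) - t := by linarith
    have hgl : ((22577:ℝ)/50000) - 1 ≤ t + t^2/2 + ((1786327949:ℝ)/10000000000)*t^3 := by
      nlinarith [hA, pow_nonneg hA 2, pow_nonneg hA 3, ht, mul_nonneg hA ht, mul_nonneg (mul_nonneg hA ht) ht]
    have hgr : t + t^2/2 + ((1786327949:ℝ)/10000000000)*t^3 ≤ ((22577:ℝ)/50000) + 1 := by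
      nlinarith [hB, pow_nonneg hB 2, pow_nonneg hB 3, ht, mul_nonneg hA hB, mul_nonneg hB hB, mul_nonneg (mul_nonneg hB hB) hB]
    have hx : |((22577:ℝ)/50000) - (t + t^2/2 + ((1786327949:ℝ)/10000000000)*t^3)| ≤ 1 := abs_le.mpr ⟨by linarith, by linarith⟩
    have hex := expx_bound hx
    have hL : (((39268231:ℝ)/25000000)) ≤ Real.exp ((22577:ℝ)/50000) := by
      refine le_trans ?_ (Real.sum_le_exp_of_nonneg (by norm_num) 10)
      simp only [Finset.sum_range_succ, Finset.sum_range_zero, Nat.factorial]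
      norm_num
    have hU := exp_neg_le_of hL (by norm_num) (by norm_num : (1:ℝ) ≤ ((636646963:ℝ)/1000000000) * ((39268231:ℝ)/25000000))
    have hsplit : Real.exp (-(t + t^2/2 + ((1786327949:ℝ)/10000000000)*t^3)) = Real.exp (-((22577:ℝ)/50000)) * Real.exp (((22577:ℝ)/50000) - (t + t^2/2 + ((1786327949:ℝ)/10000000000)*t^3)) := by
      rw [← Real.exp_add]; ring_nf
    rw [hsplit]
    have hmain : Real.exp (-((22577:ℝ)/50000)) * Real.exp (((22577:ℝ)/50000) - (t + t^2/2 + ((1786327949:ℝ)/10000000000)*t^3)) ≤ ((636646963:ℝ)/1000000000) * (1 + (((22577:ℝ)/50000) - (t + t^2/2 + ((1786327949:ℝ)/10000000000)*t^3)) + (((22577:ℝ)/50000) - (t + t^2/2 + ((1786327949:ℝ)/10000000000)*t^3))^2/2 + (((22577:ℝ)/50000) - (t + t^2/2 + ((1786327949:ℝ)/10000000000)*t^3))^3/6 + (((22577:ℝ)/50000) - (t + t^2/2 + ((1786327949:ℝ)/10000000000)*t^3))^4/24 + (((22577:ℝ)/50000) - (t + t^2/2 + ((1786327949:ℝ)/10000000000)*t^3))^4/100)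 :=
      mul_le_mul hU hex (Real.exp_pos _).le (by norm_num)
    refine le_trans hmain ?_
    rcases le_or_gt t ((373:ℝ)/1000) with hc | hc
    · have hsA : (0:ℝ) ≤ (((373:ℝ)/1000) - t) := by linarith
      have hsB : (0:ℝ) ≤ (t - ((3:ℝ)/125)) := by linarith
      linarith [sq_nonneg (((29872742017163400868321621078175683280101154604314175016502958112169434280062637:ℝ)/120000000000000000000000000000000000000000000000000000000000000000000000000000000)*(((373:ℝ)/1000) - t) + ((-66273289555125793828278344541761619486303812922106212607091939787719115228910357:ℝ)/1500000000000000000000000000000000000000000000000000000000000000000000000000000000000)), hsA, hsB, mul_nonneg hsA hsA, mul_nonneg hsB hsB, mul_nonneg hsA hsB, pow_nonneg hsA 2, mul_nonneg (pow_nonneg hsA 2) hsB, mul_nonneg (pow_nonneg hsA 3) hsB, mul_nonneg (pow_nonneg hsA 4) hsB, mul_nonneg (pow_nonneg hsA 5) hsB, mul_nonneg (pow_nonneg hsA 6) hsB, mul_nonneg (pow_nonneg hsA 7) hsB, mul_nonneg (pow_nonneg hsA 8) hsB, mul_nonneg (pow_nonneg hsA 9) hsB, mul_nonneg (pow_nonneg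 hsA 10) hsB, mul_nonneg (pow_nonneg hsA 11) hsB, pow_nonneg hsA 3, pow_nonneg hsA 4, pow_nonneg hsA 5, pow_nonneg hsA 6, pow_nonneg hsA 7, pow_nonneg hsA 8, pow_nonneg hsA 9, pow_nonneg hsA 10, pow_nonneg hsA 11, pow_nonneg hsA 12]
    · have hsA : (0:ℝ) ≤ (t - ((373:ℝ)/1000)) := by linarith
      have hsB : (0:ℝ) ≤ (((3:ℝ)/4) - t) := by linarith
      linarith [sq_nonneg (((258270052760715353211972285622069771975728708675919721549961671608577067928253033:ℝ)/3000000000000000000000000000000000000000000000000000000000000000000000000000000000)*(t - ((373:ℝ)/1000)) + ((66273289555125793828278344541761619486303812922106212607091939787719115228910357:ℝ)/1500000000000000000000000000000000000000000000000000000000000000000000000000000000000)), hsA, hsB, mul_nonneg hsA hsA, mul_nonneg hsB hsB, mul_nonneg hsA hsB, pow_nonneg hsA 2, mul_nonneg (pow_nonneg hsA 2) hsB, mul_nonneg (pow_nonneg hsA 3) hsB, mul_nonneg (pow_nonneg hsA 4) hsB, mul_nonneg (pow_nonneg hsA 5) hsB, mul_nonneg (pow_nonneg hsA 6) hsB, mul_nonneg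 (pow_nonneg hsA 7) hsB, mul_nonneg (pow_nonneg hsA 8) hsB, mul_nonneg (pow_nonneg hsA 9) hsB, mul_nonneg (pow_nonneg hsA 10) hsB, mul_nonneg (pow_nonneg hsA 11) hsB, pow_nonneg hsA 3, pow_nonneg hsA 4, pow_nonneg hsA 5, pow_nonneg hsA 6, pow_nonneg hsA 7, pow_nonneg hsA 8, pow_nonneg hsA 9, pow_nonneg hsA 10, pow_nonneg hsA 11, pow_nonneg hsA 12]
  rcases le_or_gt t ((49:ℝ)/50) with hcut2 | hcut2
  · have hA : (0:ℝ) ≤ t - ((3:ℝ)/4) := by linarith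
    have hB : (0:ℝ) ≤ ((49:ℝ)/50) - t := by linarith
    have hgl : ((67171:ℝ)/50000) - 1 ≤ t + t^2/2 + ((1786327949:ℝ)/10000000000)*t^3 := by
      nlinarith [hA, pow_nonneg hA 2, pow_nonneg hA 3, ht, mul_nonneg hA ht, mul_nonneg (mul_nonneg hA ht) ht]
    have hgr : t + t^2/2 + ((1786327949:ℝ)/10000000000)*t^3 ≤ ((67171:ℝ)/50000) + 1 := by
      nlinarith [hB, pow_nonneg hB 2, pow_nonneg hB 3, ht, mul_nonneg hA hB, mul_nonneg hB hB, mul_nonneg (mul_nonneg hB hB) hB]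
    have hx : |((67171:ℝ)/50000) - (t + t^2/2 + ((1786327949:ℝ)/10000000000)*t^3)| ≤ 1 := abs_le.mpr ⟨by linarith, by linarith⟩
    have hex := expx_bound hx
    have hL : (((383212699:ℝ)/100000000)) ≤ Real.exp ((67171:ℝ)/50000) := by
      refine le_trans ?_ (Real.sum_le_exp_of_nonneg (by norm_num) 15)
      simp only [Finset.sum_range_succ, Finset.sum_range_zero, Nat.factorial]
      norm_num
    have hU := exp_neg_le_of hL (by norm_num) (by norm_num : (1:ℝ) ≤ ((2609517:ℝ)/10000000) * ((383212699:ℝ)/100000000))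
    have hsplit : Real.exp (-(t + t^2/2 + ((1786327949:ℝ)/10000000000)*t^3)) = Real.exp (-((67171:ℝ)/50000)) * Real.exp (((67171:ℝ)/50000) - (t + t^2/2 + ((1786327949:ℝ)/10000000000)*t^3)) := by
      rw [← Real.exp_add]; ring_nf
    rw [hsplit]
    have hmain : Real.exp (-((67171:ℝ)/50000)) * Real.exp (((67171:ℝ)/50000) - (t + t^2/2 + ((1786327949:ℝ)/10000000000)*t^3)) ≤ ((2609517:ℝ)/10000000) * (1 + (((67171:ℝ)/50000) - (t + t^2/2 + ((1786327949:ℝ)/10000000000)*t^3)) + (((67171:ℝ)/50000) - (t + t^2/2 + ((1786327949:ℝ)/10000000000)*t^3))^2/2 + (((67171:ℝ)/50000) - (t + t^2/2 + ((1786327949:ℝ)/10000000000)*t^3))^3/6 + (((67171:ℝ)/50000) - (t + t^2/2 + ((1786327949:ℝ)/10000000000)*t^3))^4/24 + (((67171:ℝ)/50000) - (t + t^2/2 + ((1786327949:ℝ)/10000000000)*t^3))^4/100) :=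
      mul_le_mul hU hex (Real.exp_pos _).le (by norm_num)
    refine le_trans hmain ?_
    have hsA : (0:ℝ) ≤ (((49:ℝ)/50) - t) := by linarith
    have hsB : (0:ℝ) ≤ (t - ((3:ℝ)/4)) := by linarith
    linarith [sq_nonneg (((-167920936980514662785133816073945398523199744934892811515753953177577:ℝ)/1000000000000000000000000000000000000000000000000000000000000000000000)*(((49:ℝ)/50) - t) + ((251967223406530774673506206543186291789458413696806327827821915923:ℝ)/24414062500000000000000000000000000000000000000000000000000000000000)), hsA, hsB, mul_nonneg hsA hsA, mul_nonneg hsB hsB, mul_nonneg hsA hsB, pow_nonneg hsA 2, mul_nonneg (pow_nonneg hsA 2) hsB, mul_nonneg (pow_nonneg hsA 3) hsB, mul_nonneg (pow_nonneg hsA 4) hsB, mul_nonneg (pow_nonneg hsA 5) hsB, mul_nonneg (pow_nonneg hsA 6) hsB, mul_nonneg (pow_nonneg hsA 7) hsB, mul_nonneg (pow_nonneg hsA 8) hsB, mul_nonneg (pow_nonneg hsA 9) hsB, mul_nonneg (pow_nonneg hsA 10) hsB, mul_nonneg (pow_nonneg hsA 11) hsB, pow_nonneg hsA 3, pow_nonneg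 hsA 4, pow_nonneg hsA 5, pow_nonneg hsA 6, pow_nonneg hsA 7, pow_nonneg hsA 8, pow_nonneg hsA 9, pow_nonneg hsA 10, pow_nonneg hsA 11, pow_nonneg hsA 12]
  rcases le_or_gt t ((6:ℝ)/5) with hcut3 | hcut3
  · have hA : (0:ℝ) ≤ t - ((49:ℝ)/50) := by linarith
    have hB : (0:ℝ) ≤ ((6:ℝ)/5) - t := by linarith
    have hgl : ((95769:ℝ)/50000) - 1 ≤ t + t^2/2 + ((1786327949:ℝ)/10000000000)*t^3 := by
      nlinarith [hA, pow_nonneg hA 2, pow_nonneg hA 3, ht, mul_nonneg hA ht, mul_nonneg (mul_nonneg hA ht) ht]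
    have hgr : t + t^2/2 + ((1786327949:ℝ)/10000000000)*t^3 ≤ ((95769:ℝ)/50000) + 1 := by
      nlinarith [hB, pow_nonneg hB 2, pow_nonneg hB 3, ht, mul_nonneg hA hB, mul_nonneg hB hB, mul_nonneg (mul_nonneg hB hB) hB]
    have hx : |((95769:ℝ)/50000) - (t + t^2/2 + ((1786327949:ℝ)/10000000000)*t^3)| ≤ 1 := abs_le.mpr ⟨by linarith, by linarith⟩
    have hex := expx_bound hx
    have hL : (((84868979:ℝ)/12500000)) ≤ Real.exp ((95769:ℝ)/50000) := by
      refine le_trans ?_ (Real.sum_le_exp_of_nonneg (by norm_num) 17)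
      simp only [Finset.sum_range_succ, Finset.sum_range_zero, Nat.factorial]
      norm_num
    have hU := exp_neg_le_of hL (by norm_num) (by norm_num : (1:ℝ) ≤ ((1472859:ℝ)/10000000) * ((84868979:ℝ)/12500000))
    have hsplit : Real.exp (-(t + t^2/2 + ((1786327949:ℝ)/10000000000)*t^3)) = Real.exp (-((95769:ℝ)/50000)) * Real.exp (((95769:ℝ)/50000) - (t + t^2/2 + ((1786327949:ℝ)/10000000000)*t^3)) := by
      rw [← Real.exp_add]; ring_nf
    rw [hsplit]
    have hmain : Real.exp (-((95769:ℝ)/50000)) * Real.exp (((95769:ℝ)/50000) - (t + t^2/2 + ((1786327949:ℝ)/10000000000)*t^3)) ≤ ((1472859:ℝ)/10000000) * (1 + (((95769:ℝ)/50000) - (t + t^2/2 + ((1786327949:ℝ)/10000000000)*t^3)) + (((95769:ℝ)/50000) - (t + t^2/2 + ((1786327949:ℝ)/10000000000)*t^3))^2/2 + (((95769:ℝ)/50000) - (t + t^2/2 + ((1786327949:ℝ)/10000000000)*t^3))^3/6 + (((95769:ℝ)/50000) - (t + t^2/2 + ((1786327949:ℝ)/10000000000)*t^3))^4/24 + (((95769:ℝ)/50000)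 - (t + t^2/2 + ((1786327949:ℝ)/10000000000)*t^3))^4/100) :=
      mul_le_mul hU hex (Real.exp_pos _).le (by norm_num)
    refine le_trans hmain ?_
    have hsA : (0:ℝ) ≤ (t - ((49:ℝ)/50)) := by linarith
    have hsB : (0:ℝ) ≤ (((6:ℝ)/5) - t) := by linarith
    linarith [sq_nonneg (((-62769921096297683076849932093772778185971885306171802973518363719:ℝ)/488281250000000000000000000000000000000000000000000000000000000000)*(t - ((49:ℝ)/50)) + ((-227339270050037670013721908528460013461780264198881670811581802021:ℝ)/24414062500000000000000000000000000000000000000000000000000000000000)), hsA, hsB, mul_nonneg hsA hsA, mul_nonneg hsB hsB, mul_nonneg hsA hsB, pow_nonneg hsA 2, mul_nonneg (pow_nonneg hsA 2) hsB, mul_nonneg (pow_nonneg hsA 3) hsB, mul_nonneg (pow_nonneg hsA 4) hsB, mul_nonneg (pow_nonneg hsA 5) hsB, mul_nonneg (pow_nonneg hsA 6) hsB, mul_nonneg (pow_nonneg hsA 7) hsB, mul_nonneg (pow_nonneg hsA 8) hsB, mul_nonneg (pow_nonneg hsA 9) hsB, mul_nonneg (pow_nonneg hsA 10) hsB, mul_nonneg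 (pow_nonneg hsA 11) hsB, pow_nonneg hsA 3, pow_nonneg hsA 4, pow_nonneg hsA 5, pow_nonneg hsA 6, pow_nonneg hsA 7, pow_nonneg hsA 8, pow_nonneg hsA 9, pow_nonneg hsA 10, pow_nonneg hsA 11, pow_nonneg hsA 12]
  rcases le_or_gt t ((17:ℝ)/10) with hcut4 | hcut4
  · have hA : (0:ℝ) ≤ t - ((6:ℝ)/5) := by linarith
    have hB : (0:ℝ) ≤ ((17:ℝ)/10) - t := by linarith
    have hgl : ((308281:ℝ)/100000) - 1 ≤ t + t^2/2 + ((1786327949:ℝ)/10000000000)*t^3 := by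
      nlinarith [hA, pow_nonneg hA 2, pow_nonneg hA 3, ht, mul_nonneg hA ht, mul_nonneg (mul_nonneg hA ht) ht]
    have hgr : t + t^2/2 + ((1786327949:ℝ)/10000000000)*t^3 ≤ ((308281:ℝ)/100000) + 1 := by
      nlinarith [hB, pow_nonneg hB 2, pow_nonneg hB 3, ht, mul_nonneg hA hB, mul_nonneg hB hB, mul_nonneg (mul_nonneg hB hB) hB]
    have hx : |((308281:ℝ)/100000) - (t + t^2/2 + ((1786327949:ℝ)/10000000000)*t^3)| ≤ 1 := abs_le.mpr ⟨by linarith, by linarith⟩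
    have hex := expx_bound hx
    have hL : (((2181962949:ℝ)/100000000)) ≤ Real.exp ((308281:ℝ)/100000) := by
      refine le_trans ?_ (Real.sum_le_exp_of_nonneg (by norm_num) 22)
      simp only [Finset.sum_range_succ, Finset.sum_range_zero, Nat.factorial]
      norm_num
    have hU := exp_neg_le_of hL (by norm_num) (by norm_num : (1:ℝ) ≤ ((45830293:ℝ)/1000000000) * ((2181962949:ℝ)/100000000))
    have hsplit : Real.exp (-(t + t^2/2 + ((1786327949:ℝ)/10000000000)*t^3)) = Real.exp (-((308281:ℝ)/100000)) * Real.exp (((308281:ℝ)/100000) - (t + t^2/2 + ((1786327949:ℝ)/10000000000)*t^3)) := by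
      rw [← Real.exp_add]; ring_nf
    rw [hsplit]
    have hmain : Real.exp (-((308281:ℝ)/100000)) * Real.exp (((308281:ℝ)/100000) - (t + t^2/2 + ((1786327949:ℝ)/10000000000)*t^3)) ≤ ((45830293:ℝ)/1000000000) * (1 + (((308281:ℝ)/100000) - (t + t^2/2 + ((1786327949:ℝ)/10000000000)*t^3)) + (((308281:ℝ)/100000) - (t + t^2/2 + ((1786327949:ℝ)/10000000000)*t^3))^2/2 + (((308281:ℝ)/100000) - (t + t^2/2 + ((1786327949:ℝ)/10000000000)*t^3))^3/6 + (((308281:ℝ)/100000) - (t + t^2/2 + ((1786327949:ℝ)/10000000000)*t^3))^4/24 + (((308281:ℝ)/100000) - (t + t^2/2 + ((1786327949:ℝ)/10000000000)*t^3))^4/100) :=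
      mul_le_mul hU hex (Real.exp_pos _).le (by norm_num)
    refine le_trans hmain ?_
    rcases le_or_gt t ((14603:ℝ)/10000) with hc | hc
    · have hsA : (0:ℝ) ≤ (((14603:ℝ)/10000) - t) := by linarith
      have hsB : (0:ℝ) ≤ (t - ((6:ℝ)/5)) := by linarith
      linarith [sq_nonneg (((1234591034558258280741297943035861465506844373847622945085970823240666613088988036401629597:ℝ)/10000000000000000000000000000000000000000000000000000000000000000000000000000000000000000000)*(((14603:ℝ)/10000) - t) + ((377053540117542410860544524104195584149229382218239118954888729558006834519793153259629601:ℝ)/50000000000000000000000000000000000000000000000000000000000000000000000000000000000000000000000)), hsA, hsB, mul_nonneg hsA hsA, mul_nonneg hsB hsB, mul_nonneg hsA hsB, pow_nonneg hsA 2, mul_nonneg (pow_nonneg hsA 2) hsB, mul_nonneg (pow_nonneg hsA 3) hsB, mul_nonneg (pow_nonneg hsA 4) hsB, mul_nonneg (pow_nonneg hsA 5) hsB, mul_nonneg (pow_nonneg hsA 6) hsB, mul_nonneg (pow_nonneg hsA 7) hsB, mul_nonneg (pow_nonneg hsA 8) hsB, mul_nonneg (pow_nonneg hsA 9) hsB,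 mul_nonneg (pow_nonneg hsA 10) hsB, mul_nonneg (pow_nonneg hsA 11) hsB, pow_nonneg hsA 3, pow_nonneg hsA 4, pow_nonneg hsA 5, pow_nonneg hsA 6, pow_nonneg hsA 7, pow_nonneg hsA 8, pow_nonneg hsA 9, pow_nonneg hsA 10, pow_nonneg hsA 11, pow_nonneg hsA 12]
    · have hsA : (0:ℝ) ≤ (t - ((14603:ℝ)/10000)) := by linarith
      have hsB : (0:ℝ) ≤ (((17:ℝ)/10) - t) := by linarith
      linarith [sq_nonneg (((5853149359582450733611444138606777204621301320331274165873496731059721395672811130474252123:ℝ)/30000000000000000000000000000000000000000000000000000000000000000000000000000000000000000000)*(t - ((14603:ℝ)/10000)) + ((-377053540117542410860544524104195584149229382218239118954888729558006834519793153259629601:ℝ)/50000000000000000000000000000000000000000000000000000000000000000000000000000000000000000000000)), hsA, hsB, mul_nonneg hsA hsA, mul_nonneg hsB hsB, mul_nonneg hsA hsB, pow_nonneg hsA 2, mul_nonneg (pow_nonneg hsA 2) hsB, mul_nonneg (pow_nonneg hsA 3) hsB, mul_nonneg (pow_nonneg hsA 4) hsB, mul_nonneg (pow_nonneg hsA 5)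 hsB, mul_nonneg (pow_nonneg hsA 6) hsB, mul_nonneg (pow_nonneg hsA 7) hsB, mul_nonneg (pow_nonneg hsA 8) hsB, mul_nonneg (pow_nonneg hsA 9) hsB, mul_nonneg (pow_nonneg hsA 10) hsB, mul_nonneg (pow_nonneg hsA 11) hsB, pow_nonneg hsA 3, pow_nonneg hsA 4, pow_nonneg hsA 5, pow_nonneg hsA 6, pow_nonneg hsA 7, pow_nonneg hsA 8, pow_nonneg hsA 9, pow_nonneg hsA 10, pow_nonneg hsA 11, pow_nonneg hsA 12]
  rcases le_or_gt t (2:ℝ) with hcut5 | hcut5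
  · have hA : (0:ℝ) ≤ t - ((17:ℝ)/10) := by linarith
    have hB : (0:ℝ) ≤ (2:ℝ) - t := by linarith
    have hgl : ((117307:ℝ)/25000) - 1 ≤ t + t^2/2 + ((1786327949:ℝ)/10000000000)*t^3 := by
      nlinarith [hA, pow_nonneg hA 2, pow_nonneg hA 3, ht, mul_nonneg hA ht, mul_nonneg (mul_nonneg hA ht) ht]
    have hgr : t + t^2/2 + ((1786327949:ℝ)/10000000000)*t^3 ≤ ((117307:ℝ)/25000) + 1 := by
      nlinarith [hB, pow_nonneg hB 2, pow_nonneg hB 3, ht, mul_nonneg hA hB, mul_nonneg hB hB, mul_nonneg (mul_nonneg hB hB) hB]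
    have hx : |((117307:ℝ)/25000) - (t + t^2/2 + ((1786327949:ℝ)/10000000000)*t^3)| ≤ 1 := abs_le.mpr ⟨by linarith, by linarith⟩
    have hex := expx_bound hx
    have hL : (((545508241:ℝ)/5000000)) ≤ Real.exp ((117307:ℝ)/25000) := by
      refine le_trans ?_ (Real.sum_le_exp_of_nonneg (by norm_num) 27)
      simp only [Finset.sum_range_succ, Finset.sum_range_zero, Nat.factorial]
      norm_num
    have hU := exp_neg_le_of hL (by norm_num) (by norm_num : (1:ℝ) ≤ ((45829:ℝ)/5000000) * ((545508241:ℝ)/5000000))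
    have hsplit : Real.exp (-(t + t^2/2 + ((1786327949:ℝ)/10000000000)*t^3)) = Real.exp (-((117307:ℝ)/25000)) * Real.exp (((117307:ℝ)/25000) - (t + t^2/2 + ((1786327949:ℝ)/10000000000)*t^3)) := by
      rw [← Real.exp_add]; ring_nf
    rw [hsplit]
    have hmain : Real.exp (-((117307:ℝ)/25000)) * Real.exp (((117307:ℝ)/25000) - (t + t^2/2 + ((1786327949:ℝ)/10000000000)*t^3)) ≤ ((45829:ℝ)/5000000) * (1 + (((117307:ℝ)/25000) - (t + t^2/2 + ((1786327949:ℝ)/10000000000)*t^3)) + (((117307:ℝ)/25000) - (t + t^2/2 + ((1786327949:ℝ)/10000000000)*t^3))^2/2 + (((117307:ℝ)/25000) - (t + t^2/2 + ((1786327949:ℝ)/10000000000)*t^3))^3/6 + (((117307:ℝ)/25000) - (t + t^2/2 + ((1786327949:ℝ)/10000000000)*t^3))^4/24 + (((117307:ℝ)/25000) - (t + t^2/2 + ((1786327949:ℝ)/10000000000)*t^3))^4/100) :=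
      mul_le_mul hU hex (Real.exp_pos _).le (by norm_num)
    refine le_trans hmain ?_
    have hsA : (0:ℝ) ≤ (t - ((17:ℝ)/10)) := by linarith
    have hsB : (0:ℝ) ≤ ((2:ℝ) - t) := by linarith
    linarith [sq_nonneg (((63131752149606011918870854375776722436340273995762897863419:ℝ)/150000000000000000000000000000000000000000000000000000000000)*(t - ((17:ℝ)/10)) + ((19431117496924369508733544267780776790119609766147947060133:ℝ)/250000000000000000000000000000000000000000000000000000000000)), hsA, hsB, mul_nonneg hsA hsA, mul_nonneg hsB hsB, mul_nonneg hsA hsB, pow_nonneg hsA 2, mul_nonneg (pow_nonneg hsA 2) hsB, mul_nonneg (pow_nonneg hsA 3) hsB, mul_nonneg (pow_nonneg hsA 4) hsB, mul_nonneg (pow_nonneg hsA 5) hsB, mul_nonneg (pow_nonneg hsA 6) hsB, mul_nonneg (pow_nonneg hsA 7) hsB, mul_nonneg (pow_nonneg hsA 8) hsB, mul_nonneg (pow_nonneg hsA 9) hsB, mul_nonneg (pow_nonneg hsA 10) hsB, mul_nonneg (pow_nonneg hsA 11) hsB, pow_nonneg hsA 3, pow_nonneg hsA 4, pow_nonneg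 hsA 5, pow_nonneg hsA 6, pow_nonneg hsA 7, pow_nonneg hsA 8, pow_nonneg hsA 9, pow_nonneg hsA 10, pow_nonneg hsA 11, pow_nonneg hsA 12]
  have hB : (0:ℝ) ≤ t - (2:ℝ) := by linarith
  have hg : ((4:ℝ):ℝ) ≤ t + t^2/2 + ((1786327949:ℝ)/10000000000)*t^3 := by
    nlinarith [hB, sq_nonneg (t - (2:ℝ)), mul_nonneg (mul_nonneg hB hB) hB, ht, mul_nonneg hB ht, mul_nonneg (mul_nonneg hB ht) ht]
  have h1 : Real.exp (-(t + t^2/2 + ((1786327949:ℝ)/10000000000)*t^3)) ≤ Real.exp (-((4:ℝ):ℝ)) := by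
    apply Real.exp_le_exp.2; linarith
  have hL : (((545981:ℝ)/10000):ℝ) ≤ Real.exp ((4:ℝ):ℝ) := by
    refine le_trans ?_ (Real.sum_le_exp_of_nonneg (by norm_num) 18)
    simp only [Finset.sum_range_succ, Finset.sum_range_zero, Nat.factorial]
    norm_num
  have h2 : Real.exp (-((4:ℝ):ℝ)) ≤ ((4579:ℝ)/250000) := exp_neg_le_of hL (by norm_num) (by norm_num : (1:ℝ) ≤ ((4579:ℝ)/250000) * ((545981:ℝ)/10000))
  nlinarith [sq_nonneg (t - (2:ℝ)), hB]

set_option maxHeartbeats 1600000 in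
/-- Lemma 3.1(d): if `y ≥ 0` is square-integrable with `E[y] = μ ∈ [0,1]` and
`E[y²] ≤ 1.05771·μ + 0.231·μ²`, then `E[p(y)] ≥ 0.704·μ`, where
`p(y) = 1 - exp(-(y + y²/2 + ((4-2√3)/3)·y³))`. -/
theorem second_moment_to_ratio_d
    {Ω : Type*} [MeasurableSpace Ω] (P : Measure Ω) [IsProbabilityMeasure P]
    (y : Ω → ℝ) (μ : ℝ)
    (hy : MemLp y 2 P) (hpos : ∀ ω, 0 ≤ y ω)
    (hmean : ∫ ω, y ω ∂P = μ) (hμ0 : 0 ≤ μ) (hμ1 : μ ≤ 1)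
    (hsq : ∫ ω, (y ω) ^ 2 ∂P ≤ 1.05771 * μ + 0.231 * μ ^ 2) :
    0.704 * μ ≤ ∫ ω,
      (1 - Real.exp (-(y ω + (1/2) * (y ω) ^ 2 + ((4 - 2 * Real.sqrt 3) / 3) * (y ω) ^ 3))) ∂P := by
  have h3 : Real.sqrt 3 < 1.7320508076 := by
    rw [show (1.7320508076:ℝ) = 17320508076/10000000000 by norm_num]
    exact (Real.sqrt_lt' (by norm_num)).2 (by norm_num)
  have hcp : ((1786327949:ℝ)/10000000000) ≤ (4 - 2 * Real.sqrt 3) / 3 := by nlinarith [h3]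
  have hcp0 : (0:ℝ) ≤ (4 - 2 * Real.sqrt 3) / 3 := le_trans (by norm_num) hcp
  have hy1 : Integrable y P := hy.integrable one_le_two
  have hy2 : Integrable (fun ω => (y ω)^2) P := hy.integrable_sq
  -- the integrand
  set f : Ω → ℝ := fun ω => 1 - Real.exp (-(y ω + (1/2) * (y ω) ^ 2 + ((4 - 2 * Real.sqrt 3) / 3) * (y ω) ^ 3)) with hf
  have hfm : AEStronglyMeasurable f P := by
    have hc : Continuous (fun s : ℝ => 1 - Real.exp (-(s + (1/2) * s ^ 2 + ((4 - 2 * Real.sqrt 3) / 3) * s ^ 3))) := by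
      fun_prop
    exact hc.comp_aestronglyMeasurable hy.1
  have hfi : Integrable f P := by
    refine Integrable.mono' (integrable_const 1) hfm ?_
    filter_upwards with ω
    have h0 : (0:ℝ) ≤ y ω := hpos ω
    have hgnn : (0:ℝ) ≤ y ω + (1/2) * (y ω) ^ 2 + ((4 - 2 * Real.sqrt 3) / 3) * (y ω) ^ 3 := by
      have := mul_nonneg hcp0 (pow_nonneg h0 3)
      nlinarith [pow_nonneg h0 2]
    have hle1 : Real.exp (-(y ω + (1/2) * (y ω) ^ 2 + ((4 - 2 * Real.sqrt 3) / 3) * (y ω) ^ 3)) ≤ 1 :=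
      Real.exp_le_one_iff.2 (by linarith)
    have hpos' := Real.exp_pos (-(y ω + (1/2) * (y ω) ^ 2 + ((4 - 2 * Real.sqrt 3) / 3) * (y ω) ^ 3))
    rw [Real.norm_eq_abs, abs_le]
    constructor <;> simp only [hf] <;> nlinarith
  -- pointwise comparison with ghat
  have hptw : ∀ ω, Real.exp (-(y ω + (1/2) * (y ω) ^ 2 + ((4 - 2 * Real.sqrt 3) / 3) * (y ω) ^ 3))
      ≤ Real.exp (-(y ω + (y ω)^2/2 + ((1786327949:ℝ)/10000000000) * (y ω)^3)) := by
    intro ω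
    apply Real.exp_le_exp.2
    have := mul_le_mul_of_nonneg_right hcp (pow_nonneg (hpos ω) 3)
    nlinarith
  rcases le_or_gt μ (2/5 : ℝ) with hμc | hμc
  · -- small μ : use key1
    have hq : ∀ ω, ((996:ℝ)/1000) * y ω - ((2509:ℝ)/10000) * (y ω)^2 ≤ f ω := by
      intro ω
      have hk := key1 (y ω) (hpos ω)
      have := le_trans (hptw ω) hk
      simp only [hf]
      nlinarith [this]
    have hqint : Integrable (fun ω => ((996:ℝ)/1000) * y ω - ((2509:ℝ)/10000) * (y ω)^2) P :=
      (hy1.const_mul _).sub (hy2.const_mul _)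
    have hint := integral_mono hqint hfi hq
    rw [integral_sub (hy1.const_mul _) (hy2.const_mul _), integral_const_mul, integral_const_mul, hmean] at hint
    have hv2 : (0:ℝ) ≤ ∫ ω, (y ω)^2 ∂P := integral_nonneg (fun ω => sq_nonneg _)
    nlinarith [hint, hsq, hμ0, mul_nonneg hμ0 (sub_nonneg.2 hμc)]
  · -- large μ : use key2
    have hq : ∀ ω, (-(28515:ℝ)/1000000) + ((118066:ℝ)/100000) * y ω - ((34771:ℝ)/100000) * (y ω)^2 ≤ f ω := by
      intro ω
      have hk := key2 (y ω) (hpos ω)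
      have := le_trans (hptw ω) hk
      simp only [hf]
      nlinarith [this]
    have hqint : Integrable (fun ω => (-(28515:ℝ)/1000000) + ((118066:ℝ)/100000) * y ω - ((34771:ℝ)/100000) * (y ω)^2) P :=
      ((integrable_const _).add (hy1.const_mul _)).sub (hy2.const_mul _)
    have hadd : Integrable (fun ω => (-(28515:ℝ)/1000000) + ((118066:ℝ)/100000) * y ω) P :=
      (integrable_const _).add (hy1.const_mul _)
    have hint := integral_mono hqint hfi hq
    rw [integral_sub hadd (hy2.const_mul _),
      integral_add (integrable_const _) (hy1.const_mul _), integral_const, integral_const_mul,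
      integral_const_mul, hmean] at hint
    simp only [measure_univ, ENNReal.toReal_one, probReal_univ, smul_eq_mul, one_mul] at hint
    nlinarith [hint, hsq, mul_nonneg (sub_nonneg.2 hμc.le) (sub_nonneg.2 hμ1)]
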